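/- arXiv:2210.12419 — 4 statements merged into one kernel-verified Lean document; each statement's English description precedes it below -/
import Mathlib

section
/- Let C be a Grothendieck category and L ⊆ L′ localizing subcategories with L stable. If L′ is stable in C then L′/L is stable in C/L. -/
open CategoryTheory Limits

universe w v u u₂ u₃ u₄ u₅

namespace CentralSheaf

variable {C : Type u} [Category.{v} C] [Abelian C]

/-- A monomorphism is essential if every morphism whose precomposition with it
is a monomorphism is itself a monomorphism. -/
def IsEssentialMono {X Y : C} (f : X ⟶ Y) : Prop :=
  Mono f ∧ ∀ ⦃Z : C⦄ (g : Y ⟶ Z), Mono (f ≫ g) → Mono g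

/-- A Serre subcategory of an abelian category, given as a predicate on objects:
it contains the zero objects and is closed under isomorphisms, subobjects,
quotient objects and extensions. -/
structure IsSerre (P : C → Prop) : Prop where
  zero : ∀ X : C, IsZero X → P X
  iso : ∀ {X Y : C}, (X ≅ Y) → P X → P Y
  sub : ∀ {X Y : C} (f : X ⟶ Y), Mono f → P Y → P X
  quot : ∀ {X Y : C} (f : X ⟶ Y), Epi f → P X → P Y
  ext : ∀ S : ShortComplex C, S.ShortExact → P S.X₁ → P S.X₃ → P S.X₂

/-- A localizing subcategory: a Serre subcategory closed under arbitrary direct sums. -/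
structure IsLocalizing (P : C → Prop) extends IsSerre P : Prop where
  sums : ∀ {ι : Type v} (X : ι → C) (c : Cofan X), IsColimit c → (∀ i, P (X i)) → P c.pt

/-- Stability: closure under essential extensions. -/
def IsStable (P : C → Prop) : Prop :=
  ∀ {X Y : C} (f : X ⟶ Y), IsEssentialMono f → P X → P Y

/-- A stable localizing subcategory. -/
structure IsStableLocalizing (P : C → Prop) extends IsLocalizing P : Prop where
  stable : IsStable P

/-- Data exhibiting `D` as the Gabriel quotient `C/P` of `C` by the localizing
subcategory `P`: an exact quotient functor `T` with fully faithful right adjoint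
(section functor) `S`, whose kernel is exactly `P`. -/
structure QuotientData (P : C → Prop) (D : Type u₂) [Category.{v} D] [Abelian D] where
  T : C ⥤ D
  S : D ⥤ C
  adj : T ⊣ S
  additive : T.Additive
  preservesFiniteLimits : PreservesFiniteLimits T
  fullS : S.Full
  faithfulS : S.Faithful
  ker : ∀ X : C, P X ↔ IsZero (T.obj X)

/-- `t` is the `P`-torsion subobject of its ambient object: it lies in `P` and
contains every subobject lying in `P`. -/
def IsTorsionSubobject (P : C → Prop) {X : C} (t : Subobject X) : Prop :=
  P ((t : C)) ∧ ∀ s : Subobject X, P ((s : C)) → s ≤ t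

/-- `P₃` is the smallest localizing subcategory containing `P₁` and `P₂`. -/
def IsJoin (P₁ P₂ P₃ : C → Prop) : Prop :=
  IsLocalizing P₃ ∧ (∀ X, P₁ X → P₃ X) ∧ (∀ X, P₂ X → P₃ X) ∧
    ∀ Q : C → Prop, IsLocalizing Q → (∀ X, P₁ X → Q X) → (∀ X, P₂ X → Q X) →
      ∀ X, P₃ X → Q X

/-- An object is noetherian if its subobjects satisfy the ascending chain condition. -/
def IsNoetherianObject (X : C) : Prop := WellFoundedGT (Subobject X)

/-- A Grothendieck category is locally noetherian if it has a (separating) set of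
noetherian generators. -/
def IsLocallyNoetherian (C : Type u) [Category.{v} C] [Abelian C] : Prop :=
  ∃ 𝒢 : Set C, ObjectProperty.IsSeparating (fun G => G ∈ 𝒢) ∧ ∀ G ∈ 𝒢, IsNoetherianObject G

/-- Let `L ⊆ L′` be localizing subcategories of a Grothendieck
category `C` with `L` stable. If `L′` is stable in `C`, then the image `L′/L`
of `L′` in `C/L` is stable. -/
theorem quotient_stable_of_stable
    [HasColimits C] [AB5 C] (hsep : ∃ G : C, IsSeparator G)
    {D : Type u₂} [Category.{v} D] [Abelian D]
    (P P' : C → Prop) (hP : IsStableLocalizing P) (hP' : IsLocalizing P')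
    (hle : ∀ X, P X → P' X) (Q : QuotientData P D)
    (P'' : D → Prop)
    (hP'' : ∀ Y : D, P'' Y ↔ ∃ X : C, P' X ∧ Nonempty (Q.T.obj X ≅ Y))
    (hst : IsStable P') :
    IsStable P'' := by
  haveI := Q.additive
  haveI := Q.preservesFiniteLimits
  haveI := Q.fullS
  haveI := Q.faithfulS
  haveI : PreservesColimits Q.T := Q.adj.leftAdjoint_preservesColimits
  haveI : PreservesLimits Q.S := Q.adj.rightAdjoint_preservesLimits
  haveI : IsIso (Adjunction.counit Q.adj) := Q.adj.counit_isIso_of_R_fully_faithful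
  -- a key closure lemma: if `u : A ⟶ B` becomes an isomorphism under `T` and `P' A`,
  -- then `P' B`.
  have key : ∀ {A B : C} (u : A ⟶ B), IsIso (Q.T.map u) → P' A → P' B := by
    intro A B u hu hA
    -- the cokernel of `u` lies in `P`
    have hcoker : P (cokernel u) := by
      rw [Q.ker]
      haveI : Epi (Q.T.map u) := by infer_instance
      exact (isZero_zero D).of_iso
        ((PreservesCokernel.iso Q.T u).trans (cokernel.ofEpi (Q.T.map u)))
    -- the image of `u` lies in `P'`
    have himg : P' (Abelian.image u) := hP'.quot (Abelian.factorThruImage u)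
      inferInstance hA
    -- short exact sequence `0 ⟶ image u ⟶ B ⟶ cokernel u ⟶ 0`
    let S : ShortComplex C := ShortComplex.mk (Abelian.image.ι u) (cokernel.π u)
      (kernel.condition _)
    have hSE : S.ShortExact := by
      refine ⟨S.exact_of_f_is_kernel ?_⟩
      exact kernelIsKernel (cokernel.π u)
    exact hP'.ext S hSE himg (hle _ hcoker)
  intro X Y f hf hX
  obtain ⟨A, hA, ⟨e⟩⟩ := (hP'' X).mp hX
  -- `u : A ⟶ S X` becomes an isomorphism under `T`
  set u : A ⟶ Q.S.obj X := Q.adj.unit.app A ≫ Q.S.map e.hom with hu_def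
  have hTu : IsIso (Q.T.map u) := by
    rw [hu_def, Q.T.map_comp]
    have tri : Q.T.map (Q.adj.unit.app A) ≫ Q.adj.counit.app (Q.T.obj A) = 𝟙 _ :=
      Q.adj.left_triangle_components A
    have h1 : IsIso (Q.T.map (Q.adj.unit.app A)) := by
      have : Q.T.map (Q.adj.unit.app A) = inv (Q.adj.counit.app (Q.T.obj A)) := by
        rw [← Category.id_comp (inv _), IsIso.eq_comp_inv, tri]; rfl
      rw [this]; infer_instance
    infer_instance
  -- hence `P' (S X)`
  have hSX : P' (Q.S.obj X) := key u hTu hA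
  -- `S f` is an essential monomorphism
  have hSf : IsEssentialMono (Q.S.map f) := by
    haveI := hf.1
    constructor
    · infer_instance
    · intro Z g hg
      -- define `h : Y ⟶ T Z`
      set h : Y ⟶ Q.T.obj Z := inv (Q.adj.counit.app Y) ≫ Q.T.map g with hh_def
      have hfh : Mono (f ≫ h) := by
        have nat : Q.T.map (Q.S.map f) ≫ Q.adj.counit.app Y =
            Q.adj.counit.app X ≫ f := Q.adj.counit.naturality f
        have e2 : f ≫ inv (Q.adj.counit.app Y) =
            inv (Q.adj.counit.app X) ≫ Q.T.map (Q.S.map f) := by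
          rw [IsIso.comp_inv_eq, Category.assoc, nat, IsIso.inv_hom_id_assoc]
        have : f ≫ h = inv (Q.adj.counit.app X) ≫ Q.T.map (Q.S.map f ≫ g) := by
          rw [hh_def, Q.T.map_comp, ← Category.assoc, e2, Category.assoc]
        rw [this]
        haveI : Mono (Q.T.map (Q.S.map f ≫ g)) := Q.T.map_mono _
        apply mono_comp
      have hh : Mono h := hf.2 h hfh
      -- conclude `g` is a monomorphism by cancelling zero morphisms
      refine Preadditive.mono_of_cancel_zero g ?_
      intro W w hw
      have hw' : (Q.T.map w ≫ Q.adj.counit.app Y) ≫ h = 0 := by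
        rw [hh_def, Category.assoc, ← Category.assoc (Q.adj.counit.app Y),
          IsIso.hom_inv_id, Category.id_comp, ← Q.T.map_comp, hw, Q.T.map_zero]
      have h0 : Q.T.map w ≫ Q.adj.counit.app Y = 0 := zero_of_comp_mono h hw'
      have : w = (Q.adj.homEquiv W Y) ((Q.adj.homEquiv W Y).symm w) :=
        ((Q.adj.homEquiv W Y).apply_symm_apply w).symm
      rw [this, Adjunction.homEquiv_counit, h0]
      simp [Adjunction.homEquiv_unit]
  -- stability of `P'` gives `P' (S Y)`
  have hSY : P' (Q.S.obj Y) := hst (Q.S.map f) hSf hSX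
  -- and `T (S Y) ≅ Y` via the counit
  exact (hP'' Y).mpr ⟨Q.S.obj Y, hSY, ⟨asIso (Q.adj.counit.app Y)⟩⟩

end CentralSheaf
end

section
/- Let C be a Grothendieck category. If L₁ and L₂ are stable localizing subcategories of C, then L₁ ∨ L₂ (the smallest localizing subcategory containing both) is also stable. -/
open CategoryTheory Limits

universe w v u u₂ u₃ u₄ u₅

namespace CentralSheaf

variable {C : Type u} [Category.{v} C] [Abelian C]

-- ### helpers

lemma sesOfMono {A B : C} (i : A ⟶ B) [Mono i] :
    (ShortComplex.mk i (cokernel.π i) (cokernel.condition i)).ShortExact :=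
  { exact := ShortComplex.exact_of_f_is_kernel _
      (Abelian.monoIsKernelOfCokernel
        (CokernelCofork.ofπ (cokernel.π i) (cokernel.condition i)) (cokernelIsCokernel i))
    mono_f := by dsimp; infer_instance
    epi_g := by dsimp; infer_instance }

lemma quotHelper {P : C → Prop} (hP : IsLocalizing P) {A B X : C} (s : A ⟶ X) (t : B ⟶ X)
    (w : A ⟶ B) (hw : w ≫ t = s) (h : P (cokernel s)) : P (cokernel t) := by
  have hc : s ≫ cokernel.π t = 0 := by rw [← hw, Category.assoc, cokernel.condition, comp_zero]
  have : Epi (cokernel.desc s (cokernel.π t) hc) :=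
    epi_of_epi_fac (cokernel.π_desc s (cokernel.π t) hc)
  exact hP.quot _ this h

lemma torsion_comp_zero {P : C → Prop} (hP : IsLocalizing P) {X : C} {t : Subobject X}
    (ht : IsTorsionSubobject P t) {A : C} (f : A ⟶ X) (hA : P A) :
    f ≫ cokernel.π t.arrow = 0 := by
  have h1 : P (Abelian.image f) := hP.quot (Abelian.factorThruImage f) inferInstance hA
  have h2 : Subobject.mk (Abelian.image.ι f) ≤ t :=
    ht.2 _ (hP.iso (Subobject.underlyingIso _).symm h1)
  have h3 := Subobject.ofMkLE_arrow h2
  conv_lhs => rw [← Abelian.image.fac f]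
  rw [Category.assoc, ← h3, Category.assoc, cokernel.condition, comp_zero, comp_zero]

lemma torsion_fac {P : C → Prop} (hP : IsLocalizing P) {X : C} {t : Subobject X}
    (ht : IsTorsionSubobject P t) {A : C} (f : A ⟶ X) (hA : P A) :
    ∃ v : A ⟶ (t : C), v ≫ t.arrow = f :=
  ⟨Abelian.monoLift t.arrow f (torsion_comp_zero hP ht f hA),
   Abelian.monoLift_comp t.arrow f _⟩

lemma torsion_unique {P : C → Prop} {X : C} {t t' : Subobject X}
    (h : IsTorsionSubobject P t) (h' : IsTorsionSubobject P t') : t = t' :=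
  le_antisymm (h'.2 t h.1) (h.2 t' h'.1)

lemma torsion_exists {P : C → Prop} (hP : IsLocalizing P) [WellPowered.{v} C] [HasColimits C]
    (X : C) : ∃ t : Subobject X, IsTorsionSubobject P t := by
  let e := equivShrink.{v} {s : Subobject X // P ((s : C))}
  let F : Shrink.{v} {s : Subobject X // P ((s : C))} → C := fun i => (((e.symm i : _) : Subobject X) : C)
  let q : (∐ F) ⟶ X := Sigma.desc fun i => ((e.symm i : _) : Subobject X).arrow
  have hq : P (∐ F) :=
    hP.sums F (Cofan.mk (∐ F) (Sigma.ι F)) (coproductIsCoproduct F) fun i => (e.symm i).2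
  have him : P (Abelian.image q) := hP.quot (Abelian.factorThruImage q) inferInstance hq
  refine ⟨Subobject.mk (Abelian.image.ι q), hP.iso (Subobject.underlyingIso _).symm him, ?_⟩
  intro s hs
  have key : ∀ i, (((e.symm i : _) : Subobject X)) ≤ Subobject.mk (Abelian.image.ι q) := by
    intro i
    refine Subobject.le_mk_of_comm (Sigma.ι F i ≫ Abelian.factorThruImage q) ?_
    rw [Category.assoc, Abelian.image.fac]
    simp [q]
  have := key (e ⟨s, hs⟩)
  simpa using this

-- torsion-freeness of the quotient by the torsion subobject
lemma torsion_quot_torsionFree {P : C → Prop} (hP : IsLocalizing P) {X : C} {t : Subobject X}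
    (ht : IsTorsionSubobject P t) {A : C} (f : A ⟶ cokernel t.arrow) (hf : Mono f)
    (hA : P A) : IsZero A := by
  haveI := hf
  set π := cokernel.π t.arrow with hπ
  have hPK : P (pullback π f) := by
    have hcomm : t.arrow ≫ π = (0 : (t : C) ⟶ A) ≫ f := by rw [hπ]; simp
    set e : (t : C) ⟶ pullback π f := pullback.lift t.arrow 0 hcomm with he
    have hefst : e ≫ pullback.fst π f = t.arrow := pullback.lift_fst _ _ _
    have hesnd : e ≫ pullback.snd π f = 0 := pullback.lift_snd _ _ _
    haveI : Mono e := by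
      have : Mono (e ≫ pullback.fst π f) := by rw [hefst]; infer_instance
      exact mono_of_mono e (pullback.fst π f)
    have hlim : IsLimit (KernelFork.ofι e hesnd) := by
      refine KernelFork.IsLimit.ofι e hesnd
        (fun {W'} z hz => Abelian.monoLift t.arrow (z ≫ pullback.fst π f) ?_)
        (fun {W'} z hz => ?_) (fun {W'} z hz m hm => ?_)
      · rw [Category.assoc, pullback.condition, ← Category.assoc, hz, zero_comp]
      · apply pullback.hom_ext
        · rw [Category.assoc, hefst, Abelian.monoLift_comp]
        · rw [Category.assoc, hesnd, comp_zero, hz]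
      · rw [← cancel_mono t.arrow, Abelian.monoLift_comp, ← hm, Category.assoc, hefst]
    have hses : (ShortComplex.mk e (pullback.snd π f) hesnd).ShortExact :=
      { exact := ShortComplex.exact_of_f_is_kernel _ hlim
        mono_f := ‹_›
        epi_g := by dsimp; infer_instance }
    exact hP.ext _ hses ht.1 hA
  obtain ⟨v, hv⟩ := torsion_fac hP ht (pullback.fst π f) hPK
  have h0 : pullback.snd π f ≫ f = 0 := by
    have hzero : t.arrow ≫ π = 0 := cokernel.condition t.arrow
    rw [← pullback.condition, ← hv, Category.assoc, hzero, comp_zero]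
  have hsnd0 : pullback.snd π f = 0 := zero_of_comp_mono f h0
  exact IsZero.of_epi_eq_zero _ hsnd0

lemma image_mem {P₁ P₂ : C → Prop} (hP₁ : IsLocalizing P₁) (hP₂ : IsLocalizing P₂)
    {X Y : C} (u : X ⟶ Y) {tX : Subobject X} (htX : IsTorsionSubobject P₁ tX)
    (hcX : P₂ (cokernel tX.arrow)) {tY : Subobject Y} (htY : IsTorsionSubobject P₁ tY) :
    P₂ (Abelian.image (u ≫ cokernel.π tY.arrow)) := by
  set b := u ≫ cokernel.π tY.arrow with hb
  have h0 : tX.arrow ≫ b = 0 := by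
    rw [hb, ← Category.assoc]
    exact torsion_comp_zero hP₁ htY (tX.arrow ≫ u) htX.1
  have hw : kernel.lift b tX.arrow h0 ≫ kernel.ι b = tX.arrow := kernel.lift_ι _ _ _
  have hco : P₂ (cokernel (kernel.ι b)) := quotHelper hP₂ tX.arrow (kernel.ι b) _ hw hcX
  exact hP₂.iso (Abelian.coimageIsoImage b) hco

-- ### the candidate join
def QJ (P₁ P₂ : C → Prop) : C → Prop := fun X =>
  ∃ t : Subobject X, IsTorsionSubobject P₁ t ∧ P₂ (cokernel t.arrow)

variable {P₁ P₂ : C → Prop}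

lemma QJ_zero (hP₁ : IsLocalizing P₁) (hP₂ : IsLocalizing P₂) [WellPowered.{v} C]
    [HasColimits C] (X : C) (hX : IsZero X) : QJ P₁ P₂ X := by
  obtain ⟨t, ht⟩ := torsion_exists hP₁ X
  refine ⟨t, ht, hP₂.zero _ ?_⟩
  exact IsZero.of_epi_eq_zero (cokernel.π t.arrow) (hX.eq_of_src _ _)

lemma QJ_sub (hP₁ : IsLocalizing P₁) (hP₂ : IsLocalizing P₂) [WellPowered.{v} C]
    [HasColimits C] {X' X : C} (f : X' ⟶ X) (hm : Mono f) (hX : QJ P₁ P₂ X) :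
    QJ P₁ P₂ X' := by
  haveI := hm
  obtain ⟨t, ht, hc⟩ := hX
  obtain ⟨t'', ht''⟩ := torsion_exists hP₁ X'
  refine ⟨t'', ht'', ?_⟩
  set g := f ≫ cokernel.π t.arrow with hg
  have hker : P₁ (kernel g) := by
    have h0 : (kernel.ι g ≫ f) ≫ cokernel.π t.arrow = 0 := by
      rw [Category.assoc, ← hg, kernel.condition]
    have hv := Abelian.monoLift_comp t.arrow (kernel.ι g ≫ f) h0
    haveI : Mono (Abelian.monoLift t.arrow (kernel.ι g ≫ f) h0) := by
      have : Mono (Abelian.monoLift t.arrow (kernel.ι g ≫ f) h0 ≫ t.arrow) := by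
        rw [hv]; exact mono_comp _ _
      exact mono_of_mono _ t.arrow
    exact hP₁.sub _ ‹_› ht.1
  obtain ⟨w, hw⟩ := torsion_fac hP₁ ht'' (kernel.ι g) hker
  have h1 : P₂ (Abelian.image g) := hP₂.sub (Abelian.image.ι g) inferInstance hc
  have h2 : P₂ (Abelian.coimage g) := hP₂.iso (Abelian.coimageIsoImage g).symm h1
  exact quotHelper hP₂ (kernel.ι g) t''.arrow w hw h2

lemma QJ_iso (hP₁ : IsLocalizing P₁) (hP₂ : IsLocalizing P₂) [WellPowered.{v} C]
    [HasColimits C] {X Y : C} (e : X ≅ Y) (hX : QJ P₁ P₂ X) : QJ P₁ P₂ Y :=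
  QJ_sub hP₁ hP₂ e.inv inferInstance hX

lemma QJ_quot (hP₁ : IsLocalizing P₁) (hP₂ : IsLocalizing P₂) [WellPowered.{v} C]
    [HasColimits C] {X Z : C} (p : X ⟶ Z) (hp : Epi p) (hX : QJ P₁ P₂ X) :
    QJ P₁ P₂ Z := by
  haveI := hp
  obtain ⟨t, ht, hc⟩ := hX
  obtain ⟨tz, htz⟩ := torsion_exists hP₁ Z
  refine ⟨tz, htz, ?_⟩
  have h0 : t.arrow ≫ p ≫ cokernel.π tz.arrow = 0 := by
    rw [← Category.assoc]
    exact torsion_comp_zero hP₁ htz (t.arrow ≫ p) ht.1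
  have hd : Epi (cokernel.desc t.arrow (p ≫ cokernel.π tz.arrow) h0) :=
    epi_of_epi_fac (cokernel.π_desc _ _ _)
  exact hP₂.quot _ hd hc

lemma QJ_sums (hP₁ : IsLocalizing P₁) (hP₂ : IsLocalizing P₂) [WellPowered.{v} C]
    [HasColimits C] {ι : Type v} (Xs : ι → C) (c : Cofan Xs) (hcol : IsColimit c)
    (h : ∀ i, QJ P₁ P₂ (Xs i)) : QJ P₁ P₂ c.pt := by
  choose t ht hc using h
  obtain ⟨T, hT⟩ := torsion_exists hP₁ c.pt
  refine ⟨T, hT, ?_⟩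
  let Q : ι → C := fun i => cokernel (t i).arrow
  have hQ : P₂ (∐ Q) :=
    hP₂.sums Q (Cofan.mk (∐ Q) (Sigma.ι Q)) (coproductIsCoproduct Q) fun i => hc i
  have hcond : ∀ i, (t i).arrow ≫ c.inj i ≫ cokernel.π T.arrow = 0 := by
    intro i
    rw [← Category.assoc]
    exact torsion_comp_zero hP₁ hT ((t i).arrow ≫ c.inj i) (ht i).1
  let w : (∐ Q) ⟶ cokernel T.arrow :=
    Sigma.desc fun i => cokernel.desc (t i).arrow (c.inj i ≫ cokernel.π T.arrow) (hcond i)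
  have hw : Epi w := by
    rw [Preadditive.epi_iff_cancel_zero]
    intro Z h hzero
    have h1 : cokernel.π T.arrow ≫ h = 0 := by
      apply hcol.hom_ext
      rintro ⟨i⟩
      have e1 : Sigma.ι Q i ≫ w = cokernel.desc (t i).arrow (c.inj i ≫ cokernel.π T.arrow)
          (hcond i) := Sigma.ι_desc _ _
      have e2 : cokernel.π (t i).arrow ≫ Sigma.ι Q i ≫ w = c.inj i ≫ cokernel.π T.arrow := by
        rw [e1, cokernel.π_desc]
      have : c.ι.app ⟨i⟩ ≫ cokernel.π T.arrow ≫ h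
          = cokernel.π (t i).arrow ≫ (Sigma.ι Q i ≫ w) ≫ h := by
        rw [← Category.assoc, ← Category.assoc, e2]
        rfl
      rw [this]
      simp only [Category.assoc, hzero, comp_zero]
    rw [← cancel_epi (cokernel.π T.arrow), h1, comp_zero]
  exact hP₂.quot w hw hQ

lemma QJ_ext (hP₁ : IsLocalizing P₁) (hP₂ : IsStableLocalizing P₂) [WellPowered.{v} C]
    [HasColimits C] (S : ShortComplex C) (hS : S.ShortExact)
    (h1 : QJ P₁ P₂ S.X₁) (h3 : QJ P₁ P₂ S.X₃) : QJ P₁ P₂ S.X₂ := by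
  have hL2 := hP₂.toIsLocalizing
  obtain ⟨t₁, ht₁, hc₁⟩ := h1
  obtain ⟨t₃, ht₃, hc₃⟩ := h3
  obtain ⟨t₂, ht₂⟩ := torsion_exists hP₁ S.X₂
  refine ⟨t₂, ht₂, ?_⟩
  haveI := hS.mono_f
  haveI := hS.epi_g
  set π₂ := cokernel.π t₂.arrow with hπ₂
  set a := S.f ≫ π₂ with ha
  have hM : P₂ (Abelian.image a) := image_mem hP₁ hL2 S.f ht₁ hc₁ ht₂
  set fst := pullback.fst S.g t₃.arrow with hfst
  set snd := pullback.snd S.g t₃.arrow with hsnd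
  haveI hsndepi : Epi snd := by rw [hsnd]; infer_instance
  set r := fst ≫ π₂ with hr
  set pN := Abelian.factorThruImage r with hpN
  set ιN := Abelian.image.ι r with hιN
  haveI : Mono ιN := by rw [hιN]; infer_instance
  haveI : Epi pN := by rw [hpN]; infer_instance
  have hl0 : S.f ≫ S.g = (0 : S.X₁ ⟶ (t₃ : C)) ≫ t₃.arrow := by rw [S.zero, zero_comp]
  set l := pullback.lift S.f (0 : S.X₁ ⟶ (t₃ : C)) hl0 with hl
  have hlfst : l ≫ fst = S.f := pullback.lift_fst _ _ _
  have hla : l ≫ r = a := by rw [hr, ← Category.assoc, hlfst, ha]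
  have hj0 : Abelian.image.ι a ≫ cokernel.π r = 0 := by
    have h' : a ≫ cokernel.π r = 0 := by
      rw [← hla, Category.assoc, cokernel.condition, comp_zero]
    have h'' : Abelian.factorThruImage a ≫ Abelian.image.ι a ≫ cokernel.π r = 0 := by
      rw [← Category.assoc, Abelian.image.fac]; exact h'
    exact zero_of_epi_comp _ h''
  set j : Abelian.image a ⟶ Abelian.image r :=
    kernel.lift (cokernel.π r) (Abelian.image.ι a) hj0 with hj
  have hjι : j ≫ ιN = Abelian.image.ι a := by rw [hιN, hj]; exact kernel.lift_ι _ _ _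
  haveI hjm : Mono j := by
    have : Mono (j ≫ ιN) := by rw [hjι]; infer_instance
    exact mono_of_mono j ιN
  -- P₁ (cokernel j)
  have hcokj : P₁ (cokernel j) := by
    have hks : (kernel.ι snd ≫ fst) ≫ S.g = 0 := by
      rw [Category.assoc, hfst, hsnd, pullback.condition, ← Category.assoc,
        ← hsnd, kernel.condition, zero_comp]
    obtain ⟨e0, he0⟩ := KernelFork.IsLimit.lift' hS.fIsKernel _ hks
    have he0' : e0 ≫ S.f = kernel.ι snd ≫ fst := he0
    have h1' : kernel.ι snd ≫ pN = e0 ≫ Abelian.factorThruImage a ≫ j := by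
      have e1 : (kernel.ι snd ≫ pN) ≫ ιN = e0 ≫ a := by
        rw [Category.assoc, hpN, hιN, Abelian.image.fac, hr, ← Category.assoc, ← he0',
          ha, Category.assoc]
      have e2 : (e0 ≫ Abelian.factorThruImage a ≫ j) ≫ ιN = e0 ≫ a := by
        rw [Category.assoc, Category.assoc, hjι, Abelian.image.fac]
      rw [← cancel_mono ιN, e1, e2]
    have hkc : kernel.ι snd ≫ pN ≫ cokernel.π j = 0 := by
      rw [← Category.assoc, h1']
      simp only [Category.assoc, cokernel.condition, comp_zero]
    have hψ : snd ≫ Abelian.epiDesc snd (pN ≫ cokernel.π j) hkc = pN ≫ cokernel.π j :=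
      Abelian.comp_epiDesc _ _ _
    have : Epi (Abelian.epiDesc snd (pN ≫ cokernel.π j) hkc) := epi_of_epi_fac hψ
    exact hP₁.quot _ this ht₃.1
  -- P₂ (cokernel ιN)
  have hQN : P₂ (cokernel ιN) := by
    have haπ : a ≫ cokernel.π ιN = 0 := by
      calc a ≫ cokernel.π ιN
          = Abelian.factorThruImage a ≫ (j ≫ ιN) ≫ cokernel.π ιN := by
            rw [hjι, ← Category.assoc, Abelian.image.fac]
        _ = 0 := by rw [Category.assoc, cokernel.condition, comp_zero, comp_zero]
    have hfd : S.f ≫ π₂ ≫ cokernel.π ιN = 0 := by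
      rw [← Category.assoc, ← ha]; exact haπ
    obtain ⟨χ₀, hχ₀⟩ := CokernelCofork.IsColimit.desc' hS.gIsCokernel
      (π₂ ≫ cokernel.π ιN) hfd
    have hχ₀' : S.g ≫ χ₀ = π₂ ≫ cokernel.π ιN := hχ₀
    have hta : t₃.arrow ≫ χ₀ = 0 := by
      rw [← cancel_epi snd]
      calc snd ≫ t₃.arrow ≫ χ₀
          = (fst ≫ S.g) ≫ χ₀ := by
            rw [← Category.assoc, hfst, hsnd, ← pullback.condition]
        _ = fst ≫ π₂ ≫ cokernel.π ιN := by rw [Category.assoc, hχ₀']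
        _ = (pN ≫ ιN) ≫ cokernel.π ιN := by
            rw [hpN, hιN, Abelian.image.fac, hr, Category.assoc]
        _ = 0 := by rw [Category.assoc, cokernel.condition, comp_zero]
        _ = snd ≫ 0 := by rw [comp_zero]
    have hχepi : Epi (cokernel.desc t₃.arrow χ₀ hta) := by
      haveI : Epi χ₀ := epi_of_epi_fac hχ₀'
      exact epi_of_epi_fac (cokernel.π_desc _ _ _)
    exact hL2.quot _ hχepi hc₃
  -- essentiality of j
  have hess : ∀ ⦃Z : C⦄ (h : Abelian.image r ⟶ Z), Mono (j ≫ h) → Mono h := by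
    intro Z h hmono
    haveI := hmono
    have hZ : IsZero (kernel h) := by
      have hm : Mono (kernel.ι h ≫ cokernel.π j) := by
        rw [Preadditive.mono_iff_cancel_zero]
        intro K u hu
        have hu' : (u ≫ kernel.ι h) ≫ cokernel.π j = 0 := by
          rw [Category.assoc]; exact hu
        have hv := Abelian.monoLift_comp j (u ≫ kernel.ι h) hu'
        have h0 : Abelian.monoLift j (u ≫ kernel.ι h) hu' ≫ j ≫ h = 0 := by
          rw [← Category.assoc, hv, Category.assoc, kernel.condition, comp_zero]
        have hv0 : Abelian.monoLift j (u ≫ kernel.ι h) hu' = 0 :=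
          zero_of_comp_mono _ h0
        have : u ≫ kernel.ι h = 0 := by rw [← hv, hv0, zero_comp]
        exact zero_of_comp_mono _ this
      have hP1S : P₁ (kernel h) := hP₁.sub _ hm hcokj
      haveI hmono2 : Mono (kernel.ι h ≫ ιN) := mono_comp _ _
      exact torsion_quot_torsionFree hP₁ ht₂ (kernel.ι h ≫ ιN) hmono2 hP1S
    rw [Preadditive.mono_iff_cancel_zero]
    intro K u hu
    have : u = kernel.lift h u hu ≫ kernel.ι h := (kernel.lift_ι _ _ _).symm
    rw [this, hZ.eq_of_tgt (kernel.lift h u hu) 0, zero_comp]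
  have hN : P₂ (Abelian.image r) := hP₂.stable j ⟨hjm, hess⟩ hM
  exact hL2.ext _ (sesOfMono ιN) hN hQN

lemma QJ_stable (hP₁ : IsStableLocalizing P₁) (hP₂ : IsStableLocalizing P₂) [WellPowered.{v} C]
    [HasColimits C] {X Y : C} (f : X ⟶ Y) (hf : IsEssentialMono f) (hX : QJ P₁ P₂ X) :
    QJ P₁ P₂ Y := by
  have hL1 := hP₁.toIsLocalizing
  have hL2 := hP₂.toIsLocalizing
  obtain ⟨tX, htX, hcX⟩ := hX
  obtain ⟨tY, htY⟩ := torsion_exists hL1 Y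
  refine ⟨tY, htY, ?_⟩
  haveI := hf.1
  set πY := cokernel.π tY.arrow with hπY
  set b := f ≫ πY with hb
  have hM : P₂ (Abelian.image b) := image_mem hL1 hL2 f htX hcX htY
  set pM := Abelian.factorThruImage b with hpM
  set ιM := Abelian.image.ι b with hιM
  haveI : Mono ιM := by rw [hιM]; infer_instance
  have hπY0 : tY.arrow ≫ πY = 0 := cokernel.condition tY.arrow
  have hess : IsEssentialMono ιM := by
    refine ⟨‹_›, ?_⟩
    intro Z h hmono
    haveI := hmono
    set kS := kernel.ι h with hkS
    set Kfst := pullback.fst πY kS with hKfst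
    set Ksnd := pullback.snd πY kS with hKsnd
    haveI : Mono Kfst := by rw [hKfst]; infer_instance
    haveI : Epi Ksnd := by rw [hKsnd]; infer_instance
    have he0 : tY.arrow ≫ πY = (0 : (tY : C) ⟶ kernel h) ≫ kS := by
      rw [hπY0, zero_comp]
    set e := pullback.lift tY.arrow 0 he0 with he
    have hefst : e ≫ Kfst = tY.arrow := pullback.lift_fst _ _ _
    have hesnd : e ≫ Ksnd = 0 := pullback.lift_snd _ _ _
    haveI : Mono e := by
      have : Mono (e ≫ Kfst) := by rw [hefst]; infer_instance
      exact mono_of_mono e Kfst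
    have hessK : IsEssentialMono e := by
      refine ⟨‹_›, ?_⟩
      intro Z' h' hmono'
      haveI := hmono'
      set u := kernel.ι h' with hu
      haveI : Mono (u ≫ Kfst) := mono_comp _ _
      set p := pullback.fst f (u ≫ Kfst) with hp
      set q := pullback.snd f (u ≫ Kfst) with hq
      have hT : p ≫ f = q ≫ (u ≫ Kfst) := pullback.condition
      have c1 : Kfst ≫ πY = Ksnd ≫ kS := pullback.condition
      have hpbh : p ≫ b ≫ h = 0 := by
        calc p ≫ b ≫ h = (p ≫ f) ≫ πY ≫ h := by
              rw [hb]; simp only [Category.assoc]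
          _ = q ≫ u ≫ (Kfst ≫ πY) ≫ h := by rw [hT]; simp only [Category.assoc]
          _ = q ≫ u ≫ (Ksnd ≫ kS) ≫ h := by rw [c1]
          _ = 0 := by
              have hk0 : kS ≫ h = 0 := kernel.condition h
              simp only [Category.assoc, hk0, comp_zero]
      have hppM : p ≫ pM = 0 := by
        have hx : (p ≫ pM) ≫ ιM ≫ h = p ≫ b ≫ h := by
          rw [hpM, hιM]
          simp only [Category.assoc]
          rw [← Category.assoc (Abelian.factorThruImage b), Abelian.image.fac]
        exact zero_of_comp_mono (ιM ≫ h) (by rw [hx, hpbh])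
      have hpb0 : p ≫ b = 0 := by
        have : p ≫ b = (p ≫ pM) ≫ ιM := by
          rw [Category.assoc, hpM, hιM, Abelian.image.fac]
        rw [this, hppM, zero_comp]
      have hpf : (p ≫ f) ≫ πY = 0 := by
        rw [Category.assoc, ← hb]; exact hpb0
      have hv := Abelian.monoLift_comp tY.arrow (p ≫ f) hpf
      set v := Abelian.monoLift tY.arrow (p ≫ f) hpf with hvdef
      have hve : v ≫ e = q ≫ u := by
        rw [← cancel_mono Kfst, Category.assoc, Category.assoc, hefst, hv, hT]
      have hv0 : v = 0 := by
        apply zero_of_comp_mono (e ≫ h')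
        have hk0 : u ≫ h' = 0 := kernel.condition h'
        rw [← Category.assoc, hve, Category.assoc, hk0, comp_zero]
      have hqu : q ≫ u = 0 := by rw [← hve, hv0, zero_comp]
      have hfw : Mono (f ≫ cokernel.π (u ≫ Kfst)) := by
        rw [Preadditive.mono_iff_cancel_zero]
        intro A z hz
        have hz' : (z ≫ f) ≫ cokernel.π (u ≫ Kfst) = 0 := by
          rw [Category.assoc]; exact hz
        have hz2 := Abelian.monoLift_comp (u ≫ Kfst) (z ≫ f) hz'
        have hcomm : z ≫ f = Abelian.monoLift (u ≫ Kfst) (z ≫ f) hz' ≫ (u ≫ Kfst) :=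
          hz2.symm
        have hτq : pullback.lift z _ hcomm ≫ q =
            Abelian.monoLift (u ≫ Kfst) (z ≫ f) hz' := pullback.lift_snd _ _ _
        have hzf : z ≫ f = (pullback.lift z _ hcomm ≫ q) ≫ u ≫ Kfst := by
          rw [hτq, hz2]
        have hz0 : z ≫ f = 0 := by
          rw [hzf, Category.assoc, ← Category.assoc q, hqu, zero_comp, comp_zero]
        exact zero_of_comp_mono f hz0
      have hwmono : Mono (cokernel.π (u ≫ Kfst)) := hf.2 _ hfw
      have hukfst : u ≫ Kfst = 0 :=
        zero_of_comp_mono (cokernel.π (u ≫ Kfst)) (cokernel.condition _)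
      have hu0 : u = 0 := zero_of_comp_mono Kfst hukfst
      rw [Preadditive.mono_iff_cancel_zero]
      intro A z hz
      have hzl : z = kernel.lift h' z hz ≫ kernel.ι h' := (kernel.lift_ι _ _ _).symm
      rw [hzl, ← hu, hu0, comp_zero]
    have hPK : P₁ (pullback πY kS) := hP₁.stable e hessK htY.1
    obtain ⟨v', hv'⟩ := torsion_fac hL1 htY Kfst hPK
    have h1 : Kfst ≫ πY = 0 := by rw [← hv', Category.assoc, hπY0, comp_zero]
    have h2 : Ksnd ≫ kS = 0 := by
      have c1 : Kfst ≫ πY = Ksnd ≫ kS := pullback.condition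
      rw [← c1, h1]
    have hkS0 : kS = 0 := by rw [← cancel_epi Ksnd, h2, comp_zero]
    rw [Preadditive.mono_iff_cancel_zero]
    intro A z hz
    have hzl : z = kernel.lift h z hz ≫ kernel.ι h := (kernel.lift_ι _ _ _).symm
    rw [hzl, ← hkS, hkS0, comp_zero]
  exact hP₂.stable ιM hess hM

/-- In a Grothendieck category, the join `L₁ ∨ L₂` (smallest
localizing subcategory containing both) of two stable localizing subcategories
is stable. -/
theorem join_of_stable_isStable
    [HasColimits C] [AB5 C] (hsep : ∃ G : C, IsSeparator G)
    (P₁ P₂ P₃ : C → Prop) (h₁ : IsStableLocalizing P₁) (h₂ : IsStableLocalizing P₂)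
    (hjoin : IsJoin P₁ P₂ P₃) :
    IsStable P₃ := by
  obtain ⟨G, hG⟩ := hsep
  haveI : WellPowered.{v} C := wellPowered_of_isDetector G hG.isDetector
  have hL1 := h₁.toIsLocalizing
  have hL2 := h₂.toIsLocalizing
  have hQloc : IsLocalizing (QJ P₁ P₂) :=
    { zero := QJ_zero hL1 hL2
      iso := fun e hX => QJ_iso hL1 hL2 e hX
      sub := fun f hm hX => QJ_sub hL1 hL2 f hm hX
      quot := fun f he hX => QJ_quot hL1 hL2 f he hX
      ext := fun S hS hx hz => QJ_ext hL1 h₂ S hS hx hz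
      sums := fun Xs c hc h => QJ_sums hL1 hL2 Xs c hc h }
  have h1Q : ∀ X, P₁ X → QJ P₁ P₂ X := by
    intro X hX
    obtain ⟨t, ht⟩ := torsion_exists hL1 X
    refine ⟨t, ht, hL2.zero _ ?_⟩
    have h0 : 𝟙 X ≫ cokernel.π t.arrow = 0 := torsion_comp_zero hL1 ht (𝟙 X) hX
    rw [Category.id_comp] at h0
    exact IsZero.of_epi_eq_zero _ h0
  have h2Q : ∀ X, P₂ X → QJ P₁ P₂ X := by
    intro X hX
    obtain ⟨t, ht⟩ := torsion_exists hL1 X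
    exact ⟨t, ht, hL2.quot (cokernel.π t.arrow) inferInstance hX⟩
  have hQ3 : ∀ X, QJ P₁ P₂ X → P₃ X := by
    rintro X ⟨t, ht, hc⟩
    exact hjoin.1.ext _ (sesOfMono t.arrow) (hjoin.2.1 _ ht.1) (hjoin.2.2.1 _ hc)
  have h3Q := hjoin.2.2.2 _ hQloc h1Q h2Q
  intro X Y f hfe hX
  exact hQ3 Y (QJ_stable h₁ h₂ f hfe (h3Q X hX))

end CentralSheaf
end

section
/- Let C be a Grothendieck category and L₀, L₁ stable localizing subcategories with L₀ ∩ L₁ = 0. Then every object of L₀ is L₁-closed: it is L₁-torsion-free and every short exact sequence 0 → X → Y → Z → 0 with X in L₀ and Z in L₁ splits. -/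
open CategoryTheory Limits

universe w v u u₂ u₃ u₄ u₅

namespace CentralSheaf

variable {C : Type u} [Category.{v} C] [Abelian C]

/-- Every object has a largest subobject lying in a localizing subcategory `P`. -/
lemma exists_torsion_subobject [HasColimits C] [WellPowered.{v} C]
    (P : C → Prop) (h : IsLocalizing P) (Y : C) :
    ∃ t : Subobject Y, P ((t : C)) ∧ ∀ s : Subobject Y, P ((s : C)) → s ≤ t := by
  classical
  let T := {s : Subobject Y // P ((s : C))}
  let e := equivShrink.{v} T
  let F : Shrink.{v} T → C := fun i => (((e.symm i).1 : Subobject Y) : C)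
  let f : (∐ F) ⟶ Y := Sigma.desc fun i => ((e.symm i).1 : Subobject Y).arrow
  refine ⟨Subobject.mk (Abelian.image.ι f), ?_, ?_⟩
  · have hco : P (∐ F) :=
      h.sums F (Cofan.mk _ (Sigma.ι F)) (coproductIsCoproduct F) (fun i => (e.symm i).2)
    have him : P (Abelian.image f) :=
      h.quot (Abelian.factorThruImage f) inferInstance hco
    exact h.iso (Subobject.underlyingIso (Abelian.image.ι f)).symm him
  · intro s hs
    have key : ∀ i : Shrink.{v} T, ((e.symm i).1 : Subobject Y) ≤
        Subobject.mk (Abelian.image.ι f) := by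
      intro i
      refine Subobject.le_mk_of_comm (Sigma.ι F i ≫ Abelian.factorThruImage f) ?_
      rw [Category.assoc, Abelian.image.fac]
      simp [f, F]
    have := key (e ⟨s, hs⟩)
    rwa [e.symm_apply_apply] at this

/-- The quotient of an object by its `P`-torsion subobject is `P`-torsion-free. -/
lemma torsionFree_quotient (P : C → Prop) (h : IsLocalizing P) {Y : C}
    (t : Subobject Y) (ht : P ((t : C)))
    (hmax : ∀ s : Subobject Y, P ((s : C)) → s ≤ t)
    {W : C} (wmap : W ⟶ cokernel t.arrow) [Mono wmap] (hW : P W) : IsZero W := by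
  set π := cokernel.π t.arrow with hπ
  -- the preimage of `W` in `Y`
  set fst := pullback.fst wmap π with hfst
  set snd := pullback.snd wmap π with hsnd
  have hcond : fst ≫ wmap = snd ≫ π := pullback.condition
  -- kernel of `fst` embeds into `t`
  have hks : (kernel.ι fst ≫ snd) ≫ π = 0 := by
    rw [Category.assoc, ← hcond, ← Category.assoc, kernel.condition, zero_comp]
  set m := Abelian.monoLift t.arrow (kernel.ι fst ≫ snd) hks with hm
  have hmc : m ≫ t.arrow = kernel.ι fst ≫ snd := Abelian.monoLift_comp _ _ _
  have hmono_ks : Mono (kernel.ι fst ≫ snd) := by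
    apply Preadditive.mono_of_cancel_zero
    intro A u hu
    have h1 : (u ≫ kernel.ι fst) ≫ fst = 0 ≫ fst := by
      rw [Category.assoc, kernel.condition, comp_zero, zero_comp]
    have h2 : (u ≫ kernel.ι fst) ≫ snd = 0 ≫ snd := by
      rw [Category.assoc, hu, zero_comp]
    have : u ≫ kernel.ι fst = 0 := pullback.hom_ext h1 h2
    exact zero_of_comp_mono (kernel.ι fst) this
  have hmmono : Mono m := by
    have : Mono (m ≫ t.arrow) := by rw [hmc]; exact hmono_ks
    exact mono_of_mono m t.arrow
  have hker : P (kernel fst) := h.sub m hmmono ht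
  -- the preimage is an extension of `W` by the kernel, hence lies in `P`
  have hses : (ShortComplex.mk (kernel.ι fst) fst (kernel.condition fst)).ShortExact :=
    { exact := ShortComplex.exact_of_f_is_kernel _ (kernelIsKernel fst)
      mono_f := inferInstance
      epi_g := inferInstance }
  have hPb : P (pullback wmap π) := h.ext _ hses hker hW
  -- hence the preimage is contained in `t`
  have hle : Subobject.mk snd ≤ t :=
    hmax _ (h.iso (Subobject.underlyingIso snd).symm hPb)
  have harr : (Subobject.mk snd).arrow ≫ π = 0 := by
    have hta : t.arrow ≫ π = 0 := cokernel.condition t.arrow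
    rw [← Subobject.ofLE_arrow hle, Category.assoc, hta, comp_zero]
  have hsndπ : snd ≫ π = 0 := by
    rw [← Subobject.underlyingIso_arrow snd, Category.assoc, harr, comp_zero]
  have hfst0 : fst = 0 := by
    have : fst ≫ wmap = 0 := by rw [hcond, hsndπ]
    exact zero_of_comp_mono wmap this
  rw [IsZero.iff_id_eq_zero]
  have : fst ≫ 𝟙 W = fst ≫ 0 := by rw [hfst0]; simp
  exact (cancel_epi fst).mp this

/-- If `L₀`, `L₁` are stable localizing subcategories of a
Grothendieck category with `L₀ ∩ L₁ = 0`, then every object `X` of `L₀` is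
`L₁`-closed: `X` has no nonzero subobject in `L₁`, and every short exact
sequence `0 → X → Y → Z → 0` with `Z ∈ L₁` splits. -/
theorem objects_of_disjoint_stable_are_closed
    [HasColimits C] [AB5 C] (hsep : ∃ G : C, IsSeparator G)
    (P₀ P₁ : C → Prop) (h₀ : IsStableLocalizing P₀) (h₁ : IsStableLocalizing P₁)
    (hdisj : ∀ X : C, P₀ X → P₁ X → IsZero X)
    (X : C) (hX : P₀ X) :
    (∀ s : Subobject X, P₁ ((s : C)) → IsZero ((s : C))) ∧
    ∀ ⦃Y Z : C⦄ (f : X ⟶ Y) (g : Y ⟶ Z) (w : f ≫ g = 0),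
      (ShortComplex.mk f g w).ShortExact → P₁ Z → ∃ r : Y ⟶ X, f ≫ r = 𝟙 X := by
  classical
  obtain ⟨G, hG⟩ := hsep
  haveI : WellPowered.{v} C := wellPowered_of_isSeparator G hG
  constructor
  · intro s hs
    exact hdisj _ (h₀.sub s.arrow inferInstance hX) hs
  · intro Y Z f g w hse hZ
    haveI : Mono f := hse.mono_f
    haveI : Epi g := hse.epi_g
    obtain ⟨t, ht, hmax⟩ := exists_torsion_subobject P₁ h₁.toIsLocalizing Y
    set π := cokernel.π t.arrow with hπ
    set f' := f ≫ π with hf'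
    -- the intersection `t ⊓ X` is zero
    have hV : IsZero (pullback t.arrow f) := by
      refine hdisj _ (h₀.sub (pullback.snd t.arrow f) inferInstance hX)
        (h₁.sub (pullback.fst t.arrow f) inferInstance ht)
    have hmono : Mono f' := by
      apply Preadditive.mono_of_cancel_zero
      intro A u hu
      have h1 : (u ≫ f) ≫ π = 0 := by
        rw [Category.assoc, ← hf', hu]
      set m := Abelian.monoLift t.arrow (u ≫ f) h1 with hm
      have hmc : m ≫ t.arrow = u ≫ f := Abelian.monoLift_comp _ _ _
      set l := pullback.lift m u hmc with hl
      have hl0 : l = 0 := hV.eq_zero_of_tgt l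
      have : u = l ≫ pullback.snd t.arrow f := by rw [hl, pullback.lift_snd]
      rw [this, hl0, zero_comp]
    haveI : Mono f' := hmono
    set Q := cokernel f' with hQ
    set ρ := cokernel.π f' with hρ
    -- `Q` is a quotient of `Z`, hence lies in `P₁`
    have h0 : f ≫ (π ≫ ρ) = 0 := by
      rw [← Category.assoc, ← hf', hρ, cokernel.condition]
    obtain ⟨d, hd⟩ := CokernelCofork.IsColimit.desc' hse.gIsCokernel (π ≫ ρ) h0
    have hd' : g ≫ d = π ≫ ρ := hd
    have hepi_d : Epi d := by
      haveI : Epi (g ≫ d) := by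
        rw [hd']; exact inferInstance
      exact epi_of_epi g d
    have hPQ : P₁ Q := h₁.quot d hepi_d hZ
    -- `f'` is an essential monomorphism
    have hess : IsEssentialMono f' := by
      refine ⟨hmono, ?_⟩
      intro W g' hg'
      -- the kernel of `g'` embeds into `Q`
      have hkQ : Mono (kernel.ι g' ≫ ρ) := by
        apply Preadditive.mono_of_cancel_zero
        intro A u hu
        have h1 : (u ≫ kernel.ι g') ≫ ρ = 0 := by
          rw [Category.assoc]; exact hu
        set m := Abelian.monoLift f' (u ≫ kernel.ι g') h1 with hm
        have hmc : m ≫ f' = u ≫ kernel.ι g' := Abelian.monoLift_comp _ _ _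
        have hm0 : m ≫ (f' ≫ g') = 0 := by
          rw [← Category.assoc, hmc, Category.assoc, kernel.condition, comp_zero]
        have : m = 0 := zero_of_comp_mono _ hm0
        have : u ≫ kernel.ι g' = 0 := by rw [← hmc, this, zero_comp]
        exact zero_of_comp_mono (kernel.ι g') this
      have hPk : P₁ (kernel g') :=
        h₁.sub (kernel.ι g' ≫ ρ) hkQ hPQ
      have hkz : IsZero (kernel g') :=
        torsionFree_quotient P₁ h₁.toIsLocalizing t ht hmax (kernel.ι g') hPk
      apply Preadditive.mono_of_cancel_zero
      intro A u hu
      have : u = kernel.lift g' u hu ≫ kernel.ι g' := by rw [kernel.lift_ι]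
      rw [this, hkz.eq_zero_of_tgt (kernel.lift g' u hu), zero_comp]
    -- stability of `P₀` forces the cokernel of `f'` to vanish
    have hP0 : P₀ (cokernel t.arrow) := h₀.stable f' hess hX
    have hQ0 : IsZero Q := hdisj Q (h₀.quot ρ inferInstance hP0) hPQ
    have hepi : Epi f' := by
      apply Preadditive.epi_of_cancel_zero
      intro R u hu
      have : u = ρ ≫ cokernel.desc f' u hu := by rw [cokernel.π_desc]
      rw [this, hQ0.eq_zero_of_src (cokernel.desc f' u hu), comp_zero]
    haveI : Epi f' := hepi
    haveI : IsIso f' := isIso_of_mono_of_epi f'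
    refine ⟨π ≫ inv f', ?_⟩
    rw [← Category.assoc, ← hf', IsIso.hom_inv_id]

end CentralSheaf
end

section
/- For any Grothendieck category C, the lattice of localizing subcategories of C, ordered by inclusion with meet given by intersection and join by the smallest localizing subcategory containing both, is a distributive lattice. -/
open CategoryTheory Limits

universe w v u u₂ u₃ u₄ u₅

namespace CentralSheaf

variable {C : Type u} [Category.{v} C] [Abelian C]

/-! ### Auxiliary material for the proof of distributivity -/

section Auxiliary

/-- Intersections of localizing subcategories are localizing. -/
theorem IsLocalizing.inter {P P' : C → Prop} (h : IsLocalizing P) (h' : IsLocalizing P') :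
    IsLocalizing (fun X => P X ∧ P' X) where
  zero X hX := ⟨h.zero X hX, h'.zero X hX⟩
  iso e hx := ⟨h.iso e hx.1, h'.iso e hx.2⟩
  sub f hf hy := ⟨h.sub f hf hy.1, h'.sub f hf hy.2⟩
  quot f hf hx := ⟨h.quot f hf hx.1, h'.quot f hf hx.2⟩
  ext S hS h1 h3 := ⟨h.ext S hS h1.1 h3.1, h'.ext S hS h1.2 h3.2⟩
  sums X c hc hX := ⟨h.sums X c hc fun i => (hX i).1, h'.sums X c hc fun i => (hX i).2⟩

/-- `Y` is a subquotient of `X`: a quotient of a subobject of `X`. -/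
def Subq (Y X : C) : Prop := ∃ (Z : C) (i : Z ⟶ X) (p : Z ⟶ Y), Mono i ∧ Epi p

lemma Subq.refl (X : C) : Subq X X := ⟨X, 𝟙 X, 𝟙 X, inferInstance, inferInstance⟩

lemma Subq.of_mono {Y X : C} (f : Y ⟶ X) (hf : Mono f) : Subq Y X :=
  ⟨Y, f, 𝟙 Y, hf, inferInstance⟩

lemma Subq.of_epi {Y X : C} (f : X ⟶ Y) (hf : Epi f) : Subq Y X :=
  ⟨X, 𝟙 X, f, inferInstance, hf⟩

lemma Subq.trans {Y X W : C} (h1 : Subq Y X) (h2 : Subq X W) : Subq Y W := by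
  obtain ⟨Z, i, p, hi, hp⟩ := h1
  obtain ⟨Z', i', p', hi', hp'⟩ := h2
  haveI := hi; haveI := hp; haveI := hi'; haveI := hp'
  exact ⟨pullback p' i, pullback.fst p' i ≫ i', pullback.snd p' i ≫ p,
    mono_comp _ _, epi_comp _ _⟩

lemma Subq.isZero {Y X : C} (h : Subq Y X) (hX : IsZero X) : IsZero Y := by
  obtain ⟨Z, i, p, hi, hp⟩ := h
  haveI := hi; haveI := hp
  have hZ : IsZero Z := IsZero.of_mono_eq_zero i (hX.eq_of_tgt i 0)
  exact IsZero.of_epi_eq_zero p (hZ.eq_of_src p 0)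

/-- A pullback square of natural transformations which is a pointwise pullback is
a pullback in the functor category. -/
lemma isPullback_of_pointwise {J : Type u₂} [Category.{u₃} J] {F G H K : J ⥤ C}
    {α : F ⟶ G} {β : F ⟶ H} {γ : G ⟶ K} {δ : H ⟶ K} (w : α ≫ γ = β ≫ δ)
    (h : ∀ j, IsPullback (α.app j) (β.app j) (γ.app j) (δ.app j)) :
    IsPullback α β γ δ := by
  have w' : CommSq α β γ δ := ⟨w⟩
  refine IsPullback.of_isLimit' w' ?_
  apply evaluationJointlyReflectsLimits
  intro k
  exact (isLimitMapConePullbackConeEquiv ((evaluation J C).obj k) w'.w).symm (h k).isLimit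

lemma isPullback_isIso_fst {P' X Y Z : C} {fst : P' ⟶ X} {snd : P' ⟶ Y}
    {f : X ⟶ Z} {g : Y ⟶ Z} (h : IsPullback fst snd f g) [IsIso g] : IsIso fst := by
  have h₂ : IsPullback (𝟙 X) (f ≫ inv g) f g := IsPullback.of_horiz_isIso ⟨by simp⟩
  have hf := IsPullback.isoIsPullback_hom_fst (h := h) (h' := h₂)
  rw [← hf]
  infer_instance

variable [HasColimits C] [AB5 C]

/-- The diagram of pullbacks of a morphism `m : Z ⟶ colimit L` along the structure maps
of the colimit. -/
@[simps]
noncomputable def pbDiagram {J : Type v} [SmallCategory J] (L : J ⥤ C) {Z : C}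
    (m : Z ⟶ colimit L) : J ⥤ C where
  obj j := pullback (colimit.ι L j) m
  map {j j'} f := pullback.map _ _ _ _ (L.map f) (𝟙 Z) (𝟙 _) (by simp) (by simp)
  map_id j := by apply pullback.hom_ext <;> simp
  map_comp f g := by apply pullback.hom_ext <;> simp only [pullback.map, pullback.lift_fst, pullback.lift_snd, pullback.lift_fst_assoc, Category.assoc, Functor.map_comp, Category.comp_id]

/-- AB5 covering lemma: the finite-stage pullbacks of a subobject of a filtered colimit
jointly cover it. -/
lemma cover_epi {J : Type v} [SmallCategory J] [IsFiltered J]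
    (L : J ⥤ C) {Z : C} (m : Z ⟶ colimit L) :
    Epi (Sigma.desc fun j : J => (pullback.snd (colimit.ι L j) m : _ ⟶ Z)) := by
  obtain ⟨j₀⟩ : Nonempty J := IsFiltered.nonempty
  let PB : J ⥤ C := pbDiagram L m
  let α : PB ⟶ (Functor.const J).obj Z :=
    { app := fun j => pullback.snd _ _
      naturality := fun j j' f => by dsimp [PB]; exact pullback.lift_snd _ _ _ }
  let β : PB ⟶ L :=
    { app := fun j => pullback.fst _ _
      naturality := fun j j' f => by dsimp [PB]; exact pullback.lift_fst _ _ _ }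
  let γ : (Functor.const J).obj Z ⟶ (Functor.const J).obj (colimit L) := (Functor.const J).map m
  let δ : L ⟶ (Functor.const J).obj (colimit L) := (colimit.cocone L).ι
  have w : α ≫ γ = β ≫ δ := by
    ext j
    exact pullback.condition.symm
  have hsq : IsPullback α β γ δ :=
    isPullback_of_pointwise w (fun j => (IsPullback.of_hasPullback (colimit.ι L j) m).flip)
  have hsq' := hsq.map (colim (J := J) (C := C))
  -- `colim.map δ` is an isomorphism
  let W := colimit L
  let dK : colim.obj ((Functor.const J).obj W) ⟶ W :=
    colimit.desc _ { pt := W, ι := { app := fun _ => 𝟙 W, naturality := by intros; simp } }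
  have hu : ∀ j j' : J, colimit.ι ((Functor.const J).obj W) j =
      colimit.ι ((Functor.const J).obj W) j' := by
    intro j j'
    have h1 := colimit.w ((Functor.const J).obj W) (IsFiltered.leftToMax j j')
    have h2 := colimit.w ((Functor.const J).obj W) (IsFiltered.rightToMax j j')
    simp only [Functor.const_obj_map, Category.id_comp] at h1 h2
    rw [← h1, ← h2]
  have hδ : ∀ j₁ : J, colim.map δ = colimit.ι ((Functor.const J).obj W) j₁ := by
    intro j₁
    apply colimit.hom_ext
    intro j
    rw [colimit.ι_map]
    rw [hu j j₁]
    rfl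
  haveI : IsIso (colim.map δ) := by
    refine ⟨dK, ?_, ?_⟩
    · apply colimit.hom_ext
      intro j
      simp only [← Category.assoc, colimit.ι_map]
      simp [dK, δ]
      erw [colimit.ι_desc]
      exact Category.comp_id _
    · apply colimit.hom_ext
      intro j
      rw [colimit.ι_desc_assoc]
      exact ((Category.id_comp _).trans (hδ j)).trans (Category.comp_id _).symm
  haveI : IsIso (colim.map α) := isPullback_isIso_fst hsq'
  let dZ : colim.obj ((Functor.const J).obj Z) ⟶ Z :=
    colimit.desc _ { pt := Z, ι := { app := fun _ => 𝟙 Z, naturality := by intros; simp } }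
  haveI : Epi dZ := by
    have h1 : colimit.ι ((Functor.const J).obj Z) j₀ ≫ dZ = 𝟙 Z := colimit.ι_desc _ _
    haveI : Epi (𝟙 Z) := ⟨fun u v huv => by simpa using huv⟩
    haveI : Epi (colimit.ι ((Functor.const J).obj Z) j₀ ≫ dZ) := by rw [h1]; infer_instance
    exact epi_of_epi (colimit.ι ((Functor.const J).obj Z) j₀) dZ
  have hj : ∀ j : J, (colimit.ι PB j ≫ colim.map α) ≫ dZ = pullback.snd (colimit.ι L j) m := by
    intro j
    have e2 : colimit.ι PB j ≫ colim.map α = α.app j ≫ colimit.ι ((Functor.const J).obj Z) j :=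
      colimit.ι_map _ _
    have e3 : colimit.ι ((Functor.const J).obj Z) j ≫ dZ = 𝟙 Z := colimit.ι_desc _ _
    rw [e2, Category.assoc, e3]
    exact (Category.comp_id _).trans rfl
  constructor
  intro A u v huv
  have hcomp : ∀ j : J, pullback.snd (colimit.ι L j) m ≫ u
      = pullback.snd (colimit.ι L j) m ≫ v := by
    intro j
    have h2 := congrArg
      (fun t => Sigma.ι (fun j : J => (pullback (colimit.ι L j) m : C)) j ≫ t) huv
    simpa using h2
  have he : (colim.map α ≫ dZ) ≫ u = (colim.map α ≫ dZ) ≫ v := by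
    apply colimit.hom_ext
    intro j
    simp only [← Category.assoc]
    rw [hj j]
    exact hcomp j
  haveI : Epi (colim.map α ≫ dZ) := epi_comp _ _
  exact (cancel_epi (colim.map α ≫ dZ)).mp he

/-- A predicate closed under zero, isos and extensions is closed under finite coproducts. -/
lemma finite_coprod_mem {P' : C → Prop}
    (hzero : ∀ X : C, IsZero X → P' X)
    (hiso : ∀ {X Y : C}, (X ≅ Y) → P' X → P' Y)
    (hext : ∀ S : ShortComplex C, S.ShortExact → P' S.X₁ → P' S.X₃ → P' S.X₂)
    (J : Type v) [Finite J] (X : J → C) (hX : ∀ j, P' (X j)) : P' (∐ X) := by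
  revert X
  refine Finite.induction_empty_option
    (P := fun (α : Type v) => ∀ (X : α → C), (∀ j, P' (X j)) → P' (∐ X)) ?_ ?_ ?_ J
  · intro a b e h X hX
    refine hiso (Sigma.whiskerEquiv e (fun j => Iso.refl _)) (h (X ∘ e) (fun j => hX (e j)))
  · intro X _
    refine hzero _ ((IsZero.iff_id_eq_zero _).mpr ?_)
    apply Sigma.hom_ext
    rintro ⟨⟩
  · intro α _ hα X hX
    let g : (∐ X) ⟶ ∐ (fun a : α => X (some a)) :=
      Sigma.desc (fun o => match o with
        | none => 0
        | some a => Sigma.ι (fun b : α => X (some b)) a)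
    have hzero' : Sigma.ι X none ≫ g = 0 := by simp [g]
    let S := ShortComplex.mk (Sigma.ι X none) g hzero'
    have sp : S.Splitting :=
      { r := Sigma.desc (fun o => match o with
          | none => 𝟙 (X none)
          | some _ => 0)
        s := Sigma.desc (fun a => Sigma.ι X (some a))
        f_r := by simp [S]
        s_g := by
          apply Sigma.hom_ext
          intro a
          simp [S, g]
        id := by
          apply Sigma.hom_ext
          rintro (_ | a) <;> simp [S, g, Preadditive.comp_add] }
    exact hext S sp.shortExact (hX none) (hα (fun a => X (some a)) (fun a => hX (some a)))

lemma comp_cokernelπ_zero {A Y Q' : C} (f : A ⟶ Y) (g : Y ⟶ Q') (hg : image.ι f ≫ g = 0) :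
    f ≫ g = 0 := by
  rw [← image.fac f, Category.assoc, hg, comp_zero]

/-- The canonical short exact sequence `image f → Y → cokernel (image.ι f)`. -/
lemma imageSES {A Y : C} (f : A ⟶ Y) :
    (ShortComplex.mk (image.ι f) (cokernel.π (image.ι f))
      (cokernel.condition _)).ShortExact :=
  { exact := ShortComplex.exact_of_g_is_cokernel _ (cokernelIsCokernel _) }

/-- If `w` is a kernel of `h : Z ⟶ X₃` and `p : Z ⟶ Y` is an epi, then the quotient of `Y`
by the image of `w ≫ p` is a subquotient of `X₃`. -/
lemma coker_subq {Z X₃ Y W : C} (h : Z ⟶ X₃) (p : Z ⟶ Y) (hp : Epi p) (w : W ⟶ Z)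
    (hw : w ≫ h = 0) (hker : IsLimit (KernelFork.ofι w hw)) :
    Subq (cokernel (image.ι (w ≫ p))) X₃ := by
  haveI := hp
  haveI : Mono w := by
    constructor
    intro T a b hab
    exact Fork.IsLimit.hom_ext hker (by simpa using hab)
  let S' := ShortComplex.mk w h hw
  have hexact' : S'.Exact := S'.exact_of_f_is_kernel hker
  haveI : Mono S'.f := by dsimp [S']; infer_instance
  have hmono3 := hexact'.mono_fromOpcycles
  have hw0 : S'.f ≫ (p ≫ cokernel.π (image.ι (w ≫ p))) = 0 := by
    have h3' : (w ≫ p) ≫ cokernel.π (image.ι (w ≫ p)) = 0 :=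
      comp_cokernelπ_zero _ _ (cokernel.condition _)
    simpa [Category.assoc] using h3'
  have hq3 : S'.pOpcycles ≫ S'.descOpcycles (p ≫ cokernel.π (image.ι (w ≫ p))) hw0
      = p ≫ cokernel.π (image.ι (w ≫ p)) := S'.p_descOpcycles _ _
  haveI : Epi (S'.descOpcycles (p ≫ cokernel.π (image.ι (w ≫ p))) hw0) := by
    haveI : Epi (S'.pOpcycles ≫ S'.descOpcycles (p ≫ cokernel.π (image.ι (w ≫ p))) hw0) := by
      rw [hq3]; exact epi_comp _ _
    exact epi_of_epi S'.pOpcycles _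
  exact ⟨S'.opcycles, S'.fromOpcycles,
    S'.descOpcycles (p ≫ cokernel.π (image.ι (w ≫ p))) hw0, hmono3, inferInstance⟩

/-- The relative predicate: every `P`-subquotient of `X` lies in `Q`. -/
def Rel (P Q : C → Prop) (X : C) : Prop := ∀ Y : C, Subq Y X → P Y → Q Y

variable {P Q : C → Prop}

lemma Rel.ext_closed (hP : IsLocalizing P) (hQ : IsLocalizing Q)
    (S : ShortComplex C) (hS : S.ShortExact)
    (h1 : Rel P Q S.X₁) (h3 : Rel P Q S.X₃) : Rel P Q S.X₂ := by
  rintro Y ⟨Z, i, p, hi, hp⟩ hPY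
  haveI := hi; haveI := hp
  haveI := hS.mono_f; haveI := hS.epi_g
  have hQY1 : Q (image (pullback.snd S.f i ≫ p)) :=
    h1 _ ⟨pullback S.f i, pullback.fst S.f i, factorThruImage (pullback.snd S.f i ≫ p),
      inferInstance, inferInstance⟩
      (hP.sub (image.ι (pullback.snd S.f i ≫ p)) inferInstance hPY)
  have hzero : pullback.snd S.f i ≫ (i ≫ S.g) = 0 := by
    rw [← Category.assoc, ← pullback.condition, Category.assoc, S.zero, comp_zero]
  have hker : IsLimit (KernelFork.ofι (pullback.snd S.f i) hzero) := by
    refine KernelFork.IsLimit.ofι _ _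
      (fun {T} t ht => pullback.lift (hS.exact.lift (t ≫ i) (by simpa using ht)) t (by simp))
      (fun {T} t ht => pullback.lift_snd _ _ _)
      ?_
    intro T t ht u hu
    apply pullback.hom_ext
    · rw [pullback.lift_fst, ← cancel_mono S.f, Category.assoc, pullback.condition,
        hS.exact.lift_f, ← Category.assoc, hu]
    · rw [pullback.lift_snd, hu]
  have hsubq3 : Subq (cokernel (image.ι (pullback.snd S.f i ≫ p))) S.X₃ :=
    coker_subq (i ≫ S.g) p hp (pullback.snd S.f i) hzero hker
  have hQY3 : Q (cokernel (image.ι (pullback.snd S.f i ≫ p))) :=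
    h3 _ hsubq3 (hP.quot (cokernel.π _) inferInstance hPY)
  exact hQ.ext _ (imageSES (pullback.snd S.f i ≫ p)) hQY1 hQY3

lemma Rel.sums_closed (hP : IsLocalizing P) (hQ : IsLocalizing Q)
    {ι : Type v} (X : ι → C) (c : Cofan X) (hc : IsColimit c)
    (hX : ∀ i, Rel P Q (X i)) : Rel P Q c.pt := by
  rintro Y ⟨Z, i, p, hi, hp⟩ hPY
  haveI := hi; haveI := hp
  classical
  let F := Discrete.functor X
  let L := CoproductsFromFiniteFiltered.liftToFinsetObj F
  let ecl : c.pt ≅ colimit L :=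
    hc.coconePointUniqueUpToIso (CoproductsFromFiniteFiltered.liftToFinsetColimitCocone F).isColimit
  let m : Z ⟶ colimit L := i ≫ ecl.hom
  haveI : Mono m := mono_comp _ _
  -- each finite stage is in `Rel P Q`
  have hRL : ∀ J : Finset (Discrete ι), Rel P Q (L.obj J) := by
    intro J
    refine finite_coprod_mem (P' := Rel P Q) ?_ ?_ ?_ _ _ (fun x => hX x.val.as)
    · intro X₀ hX₀ Y₀ hY₀ _
      exact hQ.zero Y₀ (hY₀.isZero hX₀)
    · intro X₀ Y₀ e h Y₁ hY₁ hPY₁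
      exact h Y₁ (hY₁.trans (Subq.of_mono e.inv inferInstance)) hPY₁
    · exact fun S hS => Rel.ext_closed hP hQ S hS
  -- the images of the finite-stage pullbacks in `Y`
  let Yj : Finset (Discrete ι) → C := fun J => image (pullback.snd (colimit.ι L J) m ≫ p)
  have hQYj : ∀ J, Q (Yj J) := by
    intro J
    refine hRL J (Yj J) ⟨pullback (colimit.ι L J) m, pullback.fst (colimit.ι L J) m,
      factorThruImage _, inferInstance, inferInstance⟩ ?_
    exact hP.sub (image.ι (pullback.snd (colimit.ι L J) m ≫ p)) inferInstance hPY
  have hQcop : Q (∐ Yj) :=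
    hQ.sums Yj (Cofan.mk _ (Sigma.ι Yj)) (coproductIsCoproduct Yj) hQYj
  -- the map onto Y is epi
  have hcov : Epi (Sigma.desc fun J => (pullback.snd (colimit.ι L J) m : _ ⟶ Z)) :=
    cover_epi L m
  let ψ : (∐ Yj) ⟶ Y := Sigma.desc fun J => image.ι (pullback.snd (colimit.ι L J) m ≫ p)
  have hcomm : Limits.Sigma.map
        (fun J => factorThruImage (pullback.snd (colimit.ι L J) m ≫ p)) ≫ ψ
      = (Sigma.desc fun J => (pullback.snd (colimit.ι L J) m : _ ⟶ Z)) ≫ p := by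
    apply Sigma.hom_ext
    intro J
    simp [ψ, Yj, image.fac]
  haveI : Epi ((Sigma.desc fun J => (pullback.snd (colimit.ι L J) m : _ ⟶ Z)) ≫ p) :=
    epi_comp _ _
  haveI : Epi ψ := by
    rw [← hcomm] at this
    exact epi_of_epi
      (Limits.Sigma.map (fun J => factorThruImage (pullback.snd (colimit.ι L J) m ≫ p))) ψ
  exact hQ.quot ψ inferInstance hQcop

lemma Rel.localizing (hP : IsLocalizing P) (hQ : IsLocalizing Q) :
    IsLocalizing (Rel P Q) where
  zero X hX Y hY _ := hQ.zero Y (hY.isZero hX)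
  iso e h Y hY hPY := h Y (hY.trans (Subq.of_mono e.inv inferInstance)) hPY
  sub f hf h Y hY hPY := h Y (hY.trans (Subq.of_mono f hf)) hPY
  quot f hf h Y hY hPY := h Y (hY.trans (Subq.of_epi f hf)) hPY
  ext S hS h1 h3 := Rel.ext_closed hP hQ S hS h1 h3
  sums X c hc hX := Rel.sums_closed hP hQ X c hc hX

end Auxiliary

/-- The lattice of localizing subcategories of a Grothendieck
category (meet = intersection, join = smallest localizing subcategory containing
both) is distributive: `L ∩ (L₁ ∨ L₂) = (L ∩ L₁) ∨ (L ∩ L₂)`. -/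
theorem localizing_lattice_distributive
    [HasColimits C] [AB5 C] (hsep : ∃ G : C, IsSeparator G)
    (P P₁ P₂ P₁₂ Q : C → Prop)
    (hP : IsLocalizing P) (h₁ : IsLocalizing P₁) (h₂ : IsLocalizing P₂)
    (hP₁₂ : IsJoin P₁ P₂ P₁₂)
    (hQ : IsJoin (fun X => P X ∧ P₁ X) (fun X => P X ∧ P₂ X) Q) :
    ∀ X : C, (P X ∧ P₁₂ X) ↔ Q X := by
  intro X
  constructor
  · rintro ⟨hPX, hP12X⟩
    -- P₁₂ ⊆ Rel P Q by minimality of the join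
    have hRloc : IsLocalizing (Rel P Q) := Rel.localizing hP hQ.1
    have h1R : ∀ X, P₁ X → Rel P Q X := by
      intro X hX1 Y hY hPY
      obtain ⟨Z, i, p, hi, hp⟩ := hY
      exact hQ.2.1 Y ⟨hPY, h₁.quot p hp (h₁.sub i hi hX1)⟩
    have h2R : ∀ X, P₂ X → Rel P Q X := by
      intro X hX2 Y hY hPY
      obtain ⟨Z, i, p, hi, hp⟩ := hY
      exact hQ.2.2.1 Y ⟨hPY, h₂.quot p hp (h₂.sub i hi hX2)⟩
    have hsub : ∀ X, P₁₂ X → Rel P Q X := hP₁₂.2.2.2 (Rel P Q) hRloc h1R h2R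
    exact hsub X hP12X X (Subq.refl X) hPX
  · intro hQX
    have hmin := hQ.2.2.2 (fun X => P X ∧ P₁₂ X) (hP.inter hP₁₂.1)
      (fun X hX => ⟨hX.1, hP₁₂.2.1 X hX.2⟩) (fun X hX => ⟨hX.1, hP₁₂.2.2.1 X hX.2⟩)
    exact hmin X hQX

end CentralSheaf
end
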